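/- Let p be a prime, q = p^t, let K be an algebraically closed field of characteristic p containing F_q, and let c ∈ K be nonzero. Let C = {(x,y) ∈ K × K : (x^q − x)(y^q − y) = c}. Then each of the maps (x,y) ↦ (αx + β, α⁻¹y + δ) for α ∈ F_q^*, β, δ ∈ F_q, and the map (x,y) ↦ (y,x), restricts to a permutation of the set C, and the subgroup of the symmetric group of C generated by these permutations is isomorphic to (F_q × F_q) ⋊ D_{q−1}, where D_{q−1} = F_q^* ⋊ Z/2 acts by α·(β,δ) = (αβ, α⁻¹δ) for α ∈ F_q^* and the generator of Z/2 acts by swapping the two coordinates; in particular this group of permutations has order 2q²(q−1). -/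

import Mathlib

noncomputable section

/-- The homomorphism from `Z/2` (written multiplicatively) to a group `G`, sending the
generator to a given element `a` with `a * a = 1`. -/
def zmod2Hom {G : Type*} [Group G] (a : G) (ha : a * a = 1) :
    Multiplicative (ZMod 2) →* G where
  toFun z := a ^ (Multiplicative.toAdd z).val
  map_one' := by simp
  map_mul' x y := by
    have h2 : a ^ 2 = 1 := by rw [pow_two]; exact ha
    show a ^ ((Multiplicative.toAdd (x * y)).val) = _
    rw [toAdd_mul, ZMod.val_add, ← pow_eq_pow_mod _ h2, pow_add]

/-- The generator of `Z/2`, written multiplicatively. -/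
def zmod2Gen : Multiplicative (ZMod 2) := Multiplicative.ofAdd 1

/-- Inversion as an automorphism of an abelian group. -/
def invAut (C : Type*) [CommGroup C] : MulAut C where
  toFun c := c⁻¹
  invFun c := c⁻¹
  left_inv := inv_inv
  right_inv := inv_inv
  map_mul' := mul_inv

theorem invAut_sq (C : Type*) [CommGroup C] : invAut C * invAut C = 1 := by
  ext c; exact inv_inv c

/-- The action of `Z/2` on an abelian group `C` by inversion. -/
def inversionAction (C : Type*) [CommGroup C] : Multiplicative (ZMod 2) →* MulAut C :=
  zmod2Hom (invAut C) (invAut_sq C)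

/-- The generalized dihedral group `C ⋊ Z/2` of an abelian group `C`, the generator of
`Z/2` acting by inversion.  For `C = Z_n` this is the dihedral group `D_n` of order `2n`. -/
abbrev GenDihedral (C : Type*) [CommGroup C] : Type _ :=
  C ⋊[inversionAction C] Multiplicative (ZMod 2)

/-- `AddAut A →* MulAut (Multiplicative A)`. -/
def addAutToMulAut (A : Type*) [AddGroup A] :
    Multiplicative (AddAut A) →* MulAut (Multiplicative A) where
  toFun e := AddEquiv.toMultiplicative (Multiplicative.toAdd e)
  map_one' := rfl
  map_mul' _ _ := rfl

variable (F : Type*) [Field F]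

/-- The action of `α ∈ F^*` on `F × F` by `(β,δ) ↦ (αβ, α⁻¹δ)`. -/
def diagAct : Fˣ →* Multiplicative (AddAut (F × F)) where
  toFun α := Multiplicative.ofAdd (AddEquiv.prodCongr (Multiplicative.toAdd (AddAut.mulLeft α))
    (Multiplicative.toAdd (AddAut.mulLeft α⁻¹)))
  map_one' := by
    refine Multiplicative.toAdd.injective ?_
    ext x
    · show ((1 : Fˣ) : F) * x.1 = x.1
      simp
    · show ((1⁻¹ : Fˣ) : F) * x.2 = x.2
      simp
  map_mul' α β := by
    refine Multiplicative.toAdd.injective ?_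
    ext x
    · show ((α * β : Fˣ) : F) * x.1 = (α : F) * ((β : F) * x.1)
      rw [Units.val_mul, mul_assoc]
    · show (((α * β)⁻¹ : Fˣ) : F) * x.2 = ((α⁻¹ : Fˣ) : F) * (((β⁻¹ : Fˣ) : F) * x.2)
      rw [mul_inv_rev, Units.val_mul]
      ring

/-- Coordinate swap as an additive automorphism of `F × F`. -/
def swapAut : Multiplicative (AddAut (F × F)) :=
  Multiplicative.ofAdd (AddEquiv.prodComm : (F × F) ≃+ (F × F))

theorem swapAut_sq : swapAut F * swapAut F = 1 := by
  refine Multiplicative.toAdd.injective ?_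
  ext x
  · rfl
  · rfl

/-- The action of `F^*` on `F × F` (written multiplicatively) by `α·(β,δ) = (αβ, α⁻¹δ)`. -/
def diagActM : Fˣ →* MulAut (Multiplicative (F × F)) :=
  (addAutToMulAut (F × F)).comp (diagAct F)

/-- The coordinate swap on `F × F`, written multiplicatively. -/
def swapAutM : MulAut (Multiplicative (F × F)) := (addAutToMulAut (F × F)) (swapAut F)

theorem swapAutM_sq : swapAutM F * swapAutM F = 1 := by
  rw [swapAutM, ← map_mul, swapAut_sq, map_one]

theorem diagAct_conj_swap (u : Fˣ) :
    diagAct F u⁻¹ = swapAut F * diagAct F u * (swapAut F)⁻¹ := by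
  refine Multiplicative.toAdd.injective ?_
  ext x
  · rfl
  · show ((u⁻¹⁻¹ : Fˣ) : F) * x.2 = (u : F) * x.2
    rw [inv_inv]

theorem diagActM_compat :
    ∀ g : Multiplicative (ZMod 2),
      (diagActM F).comp ((inversionAction Fˣ g).toMonoidHom) =
        (MulAut.conj (zmod2Hom (swapAutM F) (swapAutM_sq F) g)).toMonoidHom.comp
          (diagActM F) := by
  intro g
  have hmlt : (Multiplicative.toAdd g).val < 2 := ZMod.val_lt _
  have h1 : inversionAction Fˣ g = (invAut Fˣ) ^ (Multiplicative.toAdd g).val := rfl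
  have h2 : zmod2Hom (swapAutM F) (swapAutM_sq F) g =
      (swapAutM F) ^ (Multiplicative.toAdd g).val := rfl
  rw [h1, h2]
  set m := (Multiplicative.toAdd g).val with hm
  clear_value m
  interval_cases m
  · rw [pow_zero, pow_zero]
    ext u x <;> rfl
  · rw [pow_one, pow_one]
    refine MonoidHom.ext fun u => ?_
    show (addAutToMulAut (F × F)) (diagAct F u⁻¹) =
      MulAut.conj ((addAutToMulAut (F × F)) (swapAut F))
        ((addAutToMulAut (F × F)) (diagAct F u))
    rw [diagAct_conj_swap, map_mul, map_mul, map_inv, MulAut.conj_apply]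

/-- The action of the generalized dihedral group `D_{q-1} = F^* ⋊ Z/2` on `F × F` (written
multiplicatively), where `α ∈ F^*` acts by `α·(β,δ) = (αβ, α⁻¹δ)` and the generator of
`Z/2` acts by swapping the two coordinates. -/
def dihedralOnPairs : GenDihedral Fˣ →* MulAut (Multiplicative (F × F)) :=
  SemidirectProduct.lift (diagActM F) (zmod2Hom (swapAutM F) (swapAutM_sq F))
    (diagActM_compat F)

/-- The group `(F × F) ⋊ D_{q-1}`, where `D_{q-1} = F^* ⋊ Z/2` acts by
`α·(β,δ) = (αβ, α⁻¹δ)` for `α ∈ F^*` and the generator of `Z/2` swaps the coordinates. -/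
abbrev PairsSemidirectDihedral : Type _ :=
  (Multiplicative (F × F)) ⋊[dihedralOnPairs F] GenDihedral Fˣ

end

noncomputable section ASMaux
open Equiv

variable {p t : ℕ} [Fact p.Prime] {K : Type*} [Field K] (emb : GaloisField p t →+* K)

local notation "F" => GaloisField p t

lemma emb_pow (ht : t ≠ 0) (b : F) : emb b ^ p ^ t = emb b := by
  haveI : Fintype F := Fintype.ofFinite F
  have hcard : Fintype.card F = p ^ t := by
    rw [← Nat.card_eq_fintype_card, GaloisField.card p t ht]
  rw [← map_pow, ← hcard, FiniteField.pow_card]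

lemma emb_unit_ne (a : Fˣ) : emb (a : F) ≠ 0 := fun h =>
  a.ne_zero (emb.injective (by simpa using h))

def TA : Multiplicative (F × F) →* Perm (K × K) where
  toFun z := Equiv.prodCongr (Equiv.addRight (emb (Multiplicative.toAdd z).1))
    (Equiv.addRight (emb (Multiplicative.toAdd z).2))
  map_one' := by ext w <;> simp
  map_mul' x y := by
    ext w
    · show w.1 + emb (Multiplicative.toAdd (x*y)).1 = (w.1 + emb (Multiplicative.toAdd y).1) + emb (Multiplicative.toAdd x).1
      rw [toAdd_mul, Prod.fst_add, map_add]; ring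
    · show w.2 + emb (Multiplicative.toAdd (x*y)).2 = (w.2 + emb (Multiplicative.toAdd y).2) + emb (Multiplicative.toAdd x).2
      rw [toAdd_mul, Prod.snd_add, map_add]; ring

def SC : Fˣ →* Perm (K × K) where
  toFun a := Equiv.prodCongr (Equiv.mulLeft₀ (emb (a : F)) (emb_unit_ne emb a))
    (Equiv.mulLeft₀ (emb ((a⁻¹ : Fˣ) : F)) (emb_unit_ne emb a⁻¹))
  map_one' := by ext w <;> simp
  map_mul' a b := by
    ext w
    · show emb ((a*b : Fˣ) : F) * w.1 = emb (a : F) * (emb (b : F) * w.1)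
      rw [Units.val_mul, map_mul]; ring
    · show emb (((a*b)⁻¹ : Fˣ) : F) * w.2 = emb ((a⁻¹ : Fˣ) : F) * (emb ((b⁻¹ : Fˣ) : F) * w.2)
      rw [mul_inv_rev, Units.val_mul, map_mul]; ring

def SW : Perm (K × K) := Equiv.prodComm K K

theorem SW_sq : (SW : Perm (K × K)) * SW = 1 := by
  ext w
  · rfl
  · rfl

lemma SC_conj_SW (a : Fˣ) : SC emb a⁻¹ = SW * SC emb a * SW⁻¹ := by
  ext w
  · rfl
  · show emb ((a⁻¹⁻¹ : Fˣ) : F) * w.2 = emb (a : F) * w.2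
    rw [inv_inv]

lemma compat1 : ∀ g : Multiplicative (ZMod 2),
    (SC emb).comp ((inversionAction Fˣ g).toMonoidHom) =
      (MulAut.conj ((zmod2Hom SW SW_sq) g)).toMonoidHom.comp (SC emb) := by
  intro g
  have hmlt : (Multiplicative.toAdd g).val < 2 := ZMod.val_lt _
  have h1 : inversionAction Fˣ g = (invAut Fˣ) ^ (Multiplicative.toAdd g).val := rfl
  have h2 : (zmod2Hom SW SW_sq) g = (SW : Perm (K × K)) ^ (Multiplicative.toAdd g).val := rfl
  rw [h1, h2]
  set m := (Multiplicative.toAdd g).val with hm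
  clear_value m
  interval_cases m
  · rw [pow_zero, pow_zero]
    ext a w
    · rfl
    · rfl
  · rw [pow_one, pow_one]
    refine MonoidHom.ext fun a => ?_
    show SC emb a⁻¹ = MulAut.conj SW (SC emb a)
    rw [SC_conj_SW, MulAut.conj_apply]

end ASMaux

noncomputable section ASMaux2
open Equiv SemidirectProduct

lemma compat_mul {N G H : Type*} [Group N] [Group G] [Group H] {φ : G →* MulAut N}
    (f₁ : N →* H) (f₂ : G →* H) {g₁ g₂ : G}
    (h₁ : f₁.comp (φ g₁).toMonoidHom = (MulAut.conj (f₂ g₁)).toMonoidHom.comp f₁)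
    (h₂ : f₁.comp (φ g₂).toMonoidHom = (MulAut.conj (f₂ g₂)).toMonoidHom.comp f₁) :
    f₁.comp (φ (g₁ * g₂)).toMonoidHom = (MulAut.conj (f₂ (g₁ * g₂))).toMonoidHom.comp f₁ := by
  ext n
  have e₁ := DFunLike.congr_fun h₁ ((φ g₂) n)
  have e₂ := DFunLike.congr_fun h₂ n
  simp only [MonoidHom.comp_apply, MulEquiv.coe_toMonoidHom, MulAut.conj_apply] at e₁ e₂ ⊢
  rw [map_mul φ, MulAut.mul_apply, e₁, e₂, map_mul f₂]
  group

variable {p t : ℕ} [Fact p.Prime] {K : Type*} [Field K] (emb : GaloisField p t →+* K)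

local notation "F" => GaloisField p t

lemma compat2_inl (a : Fˣ) :
    (TA emb).comp ((dihedralOnPairs F (inl a)).toMonoidHom) =
      (MulAut.conj ((SemidirectProduct.lift (SC emb) (zmod2Hom SW SW_sq) (compat1 emb)) (inl a))).toMonoidHom.comp (TA emb) := by
  rw [lift_inl]
  have hd : dihedralOnPairs F (inl a) = diagActM F a := by
    rw [dihedralOnPairs, lift_inl]
  rw [hd]
  refine MonoidHom.ext fun z => Equiv.ext fun w => ?_
  simp only [MonoidHom.comp_apply, MulEquiv.coe_toMonoidHom, MulAut.conj_apply,
    Perm.mul_apply, TA, SC, diagActM, diagAct, addAutToMulAut, MonoidHom.coe_mk,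
    OneHom.coe_mk, MonoidHom.coe_comp, Function.comp_apply]
  have htoAdd : Multiplicative.toAdd
      ((AddEquiv.toMultiplicative (AddEquiv.prodCongr (AddAut.mulLeft a) (AddAut.mulLeft a⁻¹))) z)
      = ((a : F) * (Multiplicative.toAdd z).1, ((a⁻¹ : Fˣ) : F) * (Multiplicative.toAdd z).2) := rfl
  erw [htoAdd]
  have hinv : (Equiv.prodCongr (Equiv.mulLeft₀ (emb (a:F)) (emb_unit_ne emb a))
      (Equiv.mulLeft₀ (emb ((a⁻¹:Fˣ):F)) (emb_unit_ne emb a⁻¹)))⁻¹ w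
      = ((emb (a:F))⁻¹ * w.1, (emb ((a⁻¹:Fˣ):F))⁻¹ * w.2) := rfl
  rw [hinv]
  simp only [Equiv.prodCongr_apply, Prod.map, Equiv.coe_addRight, Equiv.mulLeft₀_apply]
  refine Prod.ext ?_ ?_ <;>
  · simp only [map_mul]
    field_simp

abbrev DH : GenDihedral Fˣ →* Perm (K × K) :=
  SemidirectProduct.lift (SC emb) (zmod2Hom SW SW_sq) (compat1 emb)

lemma compat2_inr (ε : Multiplicative (ZMod 2)) :
    (TA emb).comp ((dihedralOnPairs F (inr ε)).toMonoidHom) =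
      (MulAut.conj (DH emb (inr ε))).toMonoidHom.comp (TA emb) := by
  have hd : dihedralOnPairs F (inr ε) = (swapAutM F) ^ (Multiplicative.toAdd ε).val := by
    rw [dihedralOnPairs, lift_inr]; rfl
  have hd2 : DH emb (inr ε) = (SW : Perm (K × K)) ^ (Multiplicative.toAdd ε).val := by
    rw [DH, lift_inr]; rfl
  rw [hd, hd2]
  have hmlt : (Multiplicative.toAdd ε).val < 2 := ZMod.val_lt _
  set m := (Multiplicative.toAdd ε).val with hm
  clear_value m
  interval_cases m
  · rw [pow_zero, pow_zero]
    ext z w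
    · rfl
    · rfl
  · rw [pow_one, pow_one]
    refine MonoidHom.ext fun z => Equiv.ext fun w => ?_
    show (TA emb) ((swapAutM F) z) w = ((SW * (TA emb z) * SW⁻¹ : Perm (K × K))) w
    rfl

lemma compat2 : ∀ h : GenDihedral Fˣ,
    (TA emb).comp ((dihedralOnPairs F h).toMonoidHom) =
      (MulAut.conj (DH emb h)).toMonoidHom.comp (TA emb) := by
  intro h
  have hh : h = inl h.left * inr h.right := (inl_left_mul_inr_right h).symm
  rw [hh]
  exact compat_mul (TA emb) (DH emb) (compat2_inl emb h.left) (compat2_inr emb h.right)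

abbrev Psi : PairsSemidirectDihedral F →* Perm (K × K) :=
  SemidirectProduct.lift (TA emb) (DH emb) (compat2 emb)

lemma psi_mk (n : Multiplicative (F × F)) (a : Fˣ) (ε : Multiplicative (ZMod 2)) :
    Psi emb ⟨n, ⟨a, ε⟩⟩ =
      TA emb n * (SC emb a * (SW : Perm (K × K)) ^ (Multiplicative.toAdd ε).val) := by
  have h1 : (⟨n, ⟨a, ε⟩⟩ : PairsSemidirectDihedral F) = inl n * inr ⟨a, ε⟩ :=
    (inl_left_mul_inr_right _).symm
  have h2 : (⟨a, ε⟩ : GenDihedral Fˣ) = inl a * inr ε := (inl_left_mul_inr_right _).symm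
  rw [h1, map_mul, lift_inl, lift_inr, h2, map_mul, lift_inl, lift_inr]
  rfl

lemma psi_apply_one (n : Multiplicative (F × F)) (a : Fˣ) (w : K × K) :
    Psi emb ⟨n, ⟨a, (1 : Multiplicative (ZMod 2))⟩⟩ w =
      (emb (a : F) * w.1 + emb (Multiplicative.toAdd n).1,
       emb ((a⁻¹ : Fˣ) : F) * w.2 + emb (Multiplicative.toAdd n).2) := by
  rw [psi_mk]
  have : (Multiplicative.toAdd (1 : Multiplicative (ZMod 2))).val = 0 := rfl
  rw [this, pow_zero, mul_one]
  rfl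

lemma psi_apply_gen (n : Multiplicative (F × F)) (a : Fˣ) (w : K × K) :
    Psi emb ⟨n, ⟨a, zmod2Gen⟩⟩ w =
      (emb (a : F) * w.2 + emb (Multiplicative.toAdd n).1,
       emb ((a⁻¹ : Fˣ) : F) * w.1 + emb (Multiplicative.toAdd n).2) := by
  rw [psi_mk]
  have : (Multiplicative.toAdd zmod2Gen).val = 1 := rfl
  rw [this, pow_one]
  rfl

lemma dihedral_cases (g : PairsSemidirectDihedral F) :
    (∃ n a, g = ⟨n, ⟨a, 1⟩⟩) ∨ (∃ n a, g = ⟨n, ⟨a, zmod2Gen⟩⟩) := by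
  obtain ⟨n, a, ε⟩ := g
  rcases (by decide : ∀ x : Multiplicative (ZMod 2), x = 1 ∨ x = zmod2Gen) ε with h | h
  · exact Or.inl ⟨n, a, by rw [h]⟩
  · exact Or.inr ⟨n, a, by rw [h]⟩

variable [CharP K p]

lemma curve_shift (ht : t ≠ 0) (u b : F) (x : K) :
    (emb u * x + emb b) ^ p ^ t - (emb u * x + emb b) = emb u * (x ^ p ^ t - x) := by
  rw [add_pow_char_pow, mul_pow, emb_pow emb ht, emb_pow emb ht]
  ring

lemma psi_mem (ht : t ≠ 0) (c : K) (g : PairsSemidirectDihedral F) (z : K × K)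
    (hz : (z.1 ^ p ^ t - z.1) * (z.2 ^ p ^ t - z.2) = c) :
    ((Psi emb g z).1 ^ p ^ t - (Psi emb g z).1) * ((Psi emb g z).2 ^ p ^ t - (Psi emb g z).2)
      = c := by
  have huv : ∀ a : Fˣ, emb (a : F) * emb ((a⁻¹ : Fˣ) : F) = 1 := by
    intro a
    rw [← map_mul, ← Units.val_mul, mul_inv_cancel, Units.val_one, map_one]
  rcases dihedral_cases g with ⟨n, a, rfl⟩ | ⟨n, a, rfl⟩
  · rw [psi_apply_one]
    simp only [curve_shift emb ht]
    calc (emb (a : F) * (z.1 ^ p ^ t - z.1)) * (emb ((a⁻¹ : Fˣ) : F) * (z.2 ^ p ^ t - z.2))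
        = (emb (a : F) * emb ((a⁻¹ : Fˣ) : F)) *
            ((z.1 ^ p ^ t - z.1) * (z.2 ^ p ^ t - z.2)) := by ring
      _ = c := by rw [huv, hz, one_mul]
  · rw [psi_apply_gen]
    simp only [curve_shift emb ht]
    calc (emb (a : F) * (z.2 ^ p ^ t - z.2)) * (emb ((a⁻¹ : Fˣ) : F) * (z.1 ^ p ^ t - z.1))
        = (emb (a : F) * emb ((a⁻¹ : Fˣ) : F)) *
            ((z.1 ^ p ^ t - z.1) * (z.2 ^ p ^ t - z.2)) := by ring
      _ = c := by rw [huv, hz, one_mul]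

lemma psi_mem_iff (ht : t ≠ 0) (c : K) (g : PairsSemidirectDihedral F) (z : K × K) :
    (z.1 ^ p ^ t - z.1) * (z.2 ^ p ^ t - z.2) = c ↔
      ((Psi emb g z).1 ^ p ^ t - (Psi emb g z).1) *
        ((Psi emb g z).2 ^ p ^ t - (Psi emb g z).2) = c := by
  constructor
  · exact psi_mem emb ht c g z
  · intro h
    have h2 := psi_mem emb ht c g⁻¹ (Psi emb g z) h
    rwa [map_inv, Perm.inv_def, Equiv.symm_apply_apply] at h2

def Phi (ht : t ≠ 0) (c : K) :
    PairsSemidirectDihedral F →*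
      Perm {z : K × K // (z.1 ^ p ^ t - z.1) * (z.2 ^ p ^ t - z.2) = c} where
  toFun g := (Psi emb g).subtypePerm (fun z => (psi_mem_iff emb ht c g z).symm)
  map_one' := Equiv.ext fun z => Subtype.ext (by simp)
  map_mul' g h := Equiv.ext fun z => Subtype.ext (by simp; rfl)

lemma phi_apply (ht : t ≠ 0) (c : K) (g : PairsSemidirectDihedral F)
    (z : {z : K × K // (z.1 ^ p ^ t - z.1) * (z.2 ^ p ^ t - z.2) = c}) :
    (Phi emb ht c g z : K × K) = Psi emb g (z : K × K) := rfl

open Polynomial in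
lemma exists_asp (hq : 2 ≤ p ^ t) [IsAlgClosed K] (s : K) : ∃ x : K, x ^ p ^ t - x = s := by
  have hdeg : ((X : K[X]) + C s).degree < ((X : K[X]) ^ p ^ t).degree := by
    rw [degree_X_pow]
    calc ((X : K[X]) + C s).degree ≤ 1 := by simpa using (degree_add_le X (C s)).trans (by simp [degree_X, degree_C_le]; exact le_refl _)
      _ < (p ^ t : ℕ) := by exact_mod_cast Nat.one_lt_cast.mpr hq
  have hne : ((X : K[X]) ^ p ^ t - (X + C s)).degree ≠ 0 := by
    rw [degree_sub_eq_left_of_degree_lt hdeg, degree_X_pow]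
    intro h
    have : (p ^ t : ℕ) = 0 := by exact_mod_cast h
    omega
  obtain ⟨x, hx⟩ := IsAlgClosed.exists_root _ hne
  refine ⟨x, ?_⟩
  have := hx
  rw [IsRoot.def, eval_sub, eval_pow, eval_X, eval_add, eval_X, eval_C, sub_eq_zero] at this
  rw [this]
  ring

lemma phi_injective [IsAlgClosed K] (hq : 2 ≤ p ^ t) (ht : t ≠ 0) (c : K) :
    Function.Injective (Phi emb ht c) := by
  rw [injective_iff_map_eq_one]
  intro g hg
  obtain ⟨x1, hx1⟩ := exists_asp (p := p) (t := t) hq (1 : K)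
  obtain ⟨y1, hy1⟩ := exists_asp (p := p) (t := t) hq c
  have hshift : (x1 + 1) ^ p ^ t - (x1 + 1) = x1 ^ p ^ t - x1 := by
    rw [add_pow_char_pow, one_pow]; ring
  have hz0 : (((x1, y1) : K × K).1 ^ p ^ t - ((x1, y1) : K × K).1) *
      (((x1, y1) : K × K).2 ^ p ^ t - ((x1, y1) : K × K).2) = c := by
    simp only []; rw [hx1, hy1, one_mul]
  have hz1 : (((x1 + 1, y1) : K × K).1 ^ p ^ t - ((x1 + 1, y1) : K × K).1) *
      (((x1 + 1, y1) : K × K).2 ^ p ^ t - ((x1 + 1, y1) : K × K).2) = c := by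
    simp only []; rw [hshift, hx1, hy1, one_mul]
  have happ : ∀ z : {z : K × K // (z.1 ^ p ^ t - z.1) * (z.2 ^ p ^ t - z.2) = c},
      (Psi emb g (z : K × K)) = (z : K × K) := by
    intro z
    have := DFunLike.congr_fun hg z
    rw [Equiv.Perm.one_apply] at this
    exact congrArg Subtype.val this
  have eq0 := happ ⟨((x1, y1) : K × K), hz0⟩
  have eq1 := happ ⟨((x1 + 1, y1) : K × K), hz1⟩
  simp only [] at eq0 eq1
  rcases dihedral_cases g with ⟨n, a, rfl⟩ | ⟨n, a, rfl⟩
  · rw [psi_apply_one, Prod.mk.injEq] at eq0 eq1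
    obtain ⟨e01, e02⟩ := eq0
    obtain ⟨e11, _⟩ := eq1
    have ha : emb (a : F) = 1 := by
      have : emb (a : F) * (x1 + 1) + emb (Multiplicative.toAdd n).1 -
          (emb (a : F) * x1 + emb (Multiplicative.toAdd n).1) = (x1 + 1) - x1 := by
        rw [e01, e11]
      have h1 : emb (a : F) = 1 := by linear_combination this
      exact h1
    have haF : (a : F) = 1 := emb.injective (by rw [ha, map_one])
    have haU : a = 1 := Units.ext haF
    have hb : (Multiplicative.toAdd n).1 = 0 := by
      apply emb.injective
      rw [map_zero]
      have := e01
      rw [ha, one_mul] at this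
      linear_combination this
    have hd : (Multiplicative.toAdd n).2 = 0 := by
      apply emb.injective
      rw [map_zero]
      have hainv : emb ((a⁻¹ : Fˣ) : F) = 1 := by rw [haU]; simp
      have := e02
      rw [hainv, one_mul] at this
      linear_combination this
    have hn : n = 1 := by
      have : Multiplicative.toAdd n = (0, 0) := Prod.ext hb hd
      rw [← ofAdd_toAdd n, this]
      rfl
    rw [hn, haU]
    rfl
  · exfalso
    rw [psi_apply_gen, Prod.mk.injEq] at eq0 eq1
    obtain ⟨e01, _⟩ := eq0
    obtain ⟨e11, _⟩ := eq1
    have : (x1 : K) = x1 + 1 := e01.symm.trans e11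
    simpa using this

lemma card_sdp {N G : Type*} [Group N] [Group G] (φ : G →* MulAut N) :
    Nat.card (N ⋊[φ] G) = Nat.card N * Nat.card G := by
  rw [← Nat.card_prod]
  exact Nat.card_congr ⟨fun x => (x.left, x.right), fun x => ⟨x.1, x.2⟩, fun _ => rfl, fun _ => rfl⟩

lemma card_psd (ht : t ≠ 0) :
    Nat.card (PairsSemidirectDihedral F) = 2 * (p ^ t) ^ 2 * (p ^ t - 1) := by
  rw [card_sdp, card_sdp]
  have h1 : Nat.card (Multiplicative (F × F)) = p ^ t * p ^ t := by
    rw [Nat.card_congr Multiplicative.toAdd, Nat.card_prod, GaloisField.card p t ht]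
  have h2 : Nat.card Fˣ = p ^ t - 1 := by
    rw [Nat.card_units, GaloisField.card p t ht]
  have h3 : Nat.card (Multiplicative (ZMod 2)) = 2 := by
    rw [Nat.card_congr Multiplicative.toAdd]; simp
  rw [h1, h2, h3]
  ring

end ASMaux2

noncomputable section

/-- explicit automorphisms of the Artin–Schreier–Mumford curve, used in the
proof of Proposition 3: let `q = p^t`, `K ⊇ F_q` algebraically closed of characteristic
`p`, `c ∈ K` nonzero, and `C = {(x,y) : (x^q−x)(y^q−y) = c}`.  Each map
`(x,y) ↦ (αx+β, α⁻¹y+δ)` (`α ∈ F_q^*`, `β,δ ∈ F_q`) and the map `(x,y) ↦ (y,x)` restricts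
to a permutation of `C`, and the subgroup of `Perm C` generated by these permutations is
isomorphic to `(F_q × F_q) ⋊ D_{q−1}`; in particular it has order `2q²(q−1)`. -/
theorem artin_schreier_mumford_automorphisms {p t : ℕ} [Fact p.Prime] (ht : 1 ≤ t)
    {K : Type*} [Field K] [IsAlgClosed K] [CharP K p]
    (emb : GaloisField p t →+* K) (c : K) (hc : c ≠ 0)
    (C : Set (K × K))
    (hC : C = {z : K × K | (z.1 ^ p ^ t - z.1) * (z.2 ^ p ^ t - z.2) = c}) :
    ∃ (π : (GaloisField p t)ˣ × GaloisField p t × GaloisField p t → Equiv.Perm C)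
      (σ : Equiv.Perm C),
      (∀ (a : (GaloisField p t)ˣ) (b d : GaloisField p t) (z : C),
        ((π (a, b, d) z : K × K)) =
          (emb (a : GaloisField p t) * (z : K × K).1 + emb b,
           emb ((a⁻¹ : (GaloisField p t)ˣ) : GaloisField p t) * (z : K × K).2 + emb d)) ∧
      (∀ z : C, ((σ z : K × K)) = ((z : K × K).2, (z : K × K).1)) ∧
      Nonempty ((Subgroup.closure (Set.range π ∪ {σ})) ≃*
        PairsSemidirectDihedral (GaloisField p t)) ∧
      Nat.card (Subgroup.closure (Set.range π ∪ {σ})) =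
        2 * (p ^ t) ^ 2 * (p ^ t - 1) := by
  subst hC
  have ht' : t ≠ 0 := by omega
  have hq : 2 ≤ p ^ t := by
    have hp := (Fact.out : p.Prime).two_le
    calc 2 ≤ p := hp
      _ = p ^ 1 := (pow_one p).symm
      _ ≤ p ^ t := Nat.pow_le_pow_right (by omega) ht
  refine ⟨fun abd => Phi emb ht' c ⟨Multiplicative.ofAdd (abd.2.1, abd.2.2), ⟨abd.1, 1⟩⟩,
    Phi emb ht' c ⟨1, ⟨1, zmod2Gen⟩⟩, ?_, ?_, ?_, ?_⟩
  · intro a b d z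
    exact psi_apply_one emb (Multiplicative.ofAdd (b, d)) a (z : K × K)
  · intro z
    have h := psi_apply_gen emb 1 (1 : (GaloisField p t)ˣ) (z : K × K)
    have h1 : emb ((1 : (GaloisField p t)ˣ) : GaloisField p t) = 1 := by simp
    have h2 : emb (((1 : (GaloisField p t)ˣ)⁻¹ : (GaloisField p t)ˣ) : GaloisField p t) = 1 := by
      simp
    have h3 : (Multiplicative.toAdd (1 : Multiplicative (GaloisField p t × GaloisField p t))).1
        = 0 := rfl
    have h4 : (Multiplicative.toAdd (1 : Multiplicative (GaloisField p t × GaloisField p t))).2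
        = 0 := rfl
    rw [h1, h2, h3, h4, map_zero, add_zero, add_zero, one_mul, one_mul] at h
    exact h
  all_goals {
    have hrange : Subgroup.closure
        (Set.range (fun abd : (GaloisField p t)ˣ × GaloisField p t × GaloisField p t =>
          Phi emb ht' c ⟨Multiplicative.ofAdd (abd.2.1, abd.2.2), ⟨abd.1, 1⟩⟩) ∪
          {Phi emb ht' c ⟨1, ⟨1, zmod2Gen⟩⟩}) = (Phi emb ht' c).range := by
      apply le_antisymm
      · rw [Subgroup.closure_le]
        rintro x (⟨⟨a, b, d⟩, rfl⟩ | rfl)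
        · exact ⟨_, rfl⟩
        · exact ⟨_, rfl⟩
      · rintro x ⟨g, rfl⟩
        rcases dihedral_cases g with ⟨n, a, rfl⟩ | ⟨n, a, rfl⟩
        · exact Subgroup.subset_closure (Or.inl
            ⟨(a, (Multiplicative.toAdd n).1, (Multiplicative.toAdd n).2), rfl⟩)
        · have hfac : (⟨n, ⟨a, zmod2Gen⟩⟩ : PairsSemidirectDihedral (GaloisField p t)) =
              ⟨n, ⟨a, 1⟩⟩ * ⟨1, ⟨1, zmod2Gen⟩⟩ := by
            refine SemidirectProduct.ext ?_ ?_
            · rw [SemidirectProduct.mul_left]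
              simp
            · rw [SemidirectProduct.mul_right]
              refine SemidirectProduct.ext ?_ ?_
              · rw [SemidirectProduct.mul_left]
                simp
              · rw [SemidirectProduct.mul_right]
                simp
          rw [hfac, map_mul]
          exact mul_mem
            (Subgroup.subset_closure (Or.inl
              ⟨(a, (Multiplicative.toAdd n).1, (Multiplicative.toAdd n).2), rfl⟩))
            (Subgroup.subset_closure (Or.inr rfl))
    have hinj := phi_injective emb hq ht' c
    first
    | exact ⟨(MulEquiv.subgroupCongr hrange).trans (MonoidHom.ofInjective hinj).symm⟩
    | · rw [hrange, ← card_psd (p := p) ht']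
        exact Nat.card_congr (MonoidHom.ofInjective hinj).toEquiv.symm
  }

end
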